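/- Let Y be an l×l real matrix all of whose entries are nonnegative and each of whose row sums is at most 1. If det(I_l − Y) ≠ 0, then every complex eigenvalue λ of Y satisfies |λ| < 1. -/

import Mathlib

open Matrix Polynomial

lemma eval_charpoly' {n : ℕ} (M : Matrix (Fin n) (Fin n) ℂ) (x : ℂ) :
    M.charpoly.eval x = (x • (1 : Matrix (Fin n) (Fin n) ℂ) - M).det := by
  rw [Matrix.charpoly, ← Polynomial.coe_evalRingHom, RingHom.map_det]
  congr 1
  ext i j
  by_cases h : i = j
  · subst h; simp [Matrix.charmatrix_apply_eq, Matrix.one_apply]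
  · simp [Matrix.charmatrix_apply_ne _ _ _ h, Matrix.one_apply, h]


/-- if `Y` is an `l × l` real matrix with nonnegative entries and
row sums at most 1, and `det (I_l - Y) ≠ 0`, then every complex eigenvalue `λ`
of `Y` (root of the characteristic polynomial of `Y` over `ℂ`) satisfies
`|λ| < 1`. -/
theorem substochastic_spectral_radius_lt_one {l : ℕ}
    (Y : Matrix (Fin l) (Fin l) ℝ)
    (hnonneg : ∀ i j, 0 ≤ Y i j)
    (hsum : ∀ i, ∑ j, Y i j ≤ 1)
    (hdet : ((1 : Matrix (Fin l) (Fin l) ℝ) - Y).det ≠ 0) :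
    ∀ lam : ℂ, (Y.map Complex.ofReal).charpoly.IsRoot lam → ‖lam‖ < 1 := by
  intro lam hroot
  set M := Y.map Complex.ofReal with hM
  -- get eigenvector
  have hdet0 : (lam • (1 : Matrix (Fin l) (Fin l) ℂ) - M).det = 0 := by
    rw [← eval_charpoly']; exact hroot
  obtain ⟨v, hv0, hveq⟩ := (Matrix.exists_mulVec_eq_zero_iff).mpr hdet0
  have hveq' : lam • v = M *ᵥ v := by
    have h1 : (lam • (1 : Matrix (Fin l) (Fin l) ℂ) - M) *ᵥ v = lam • v - M *ᵥ v := by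
      rw [Matrix.sub_mulVec, Matrix.smul_mulVec, Matrix.one_mulVec]
    rw [h1] at hveq
    exact sub_eq_zero.mp hveq
  have heig : ∀ i, lam * v i = ∑ j, (Y i j : ℂ) * v j := by
    intro i
    have := congrFun hveq' i
    simpa [Matrix.mulVec, dotProduct, hM] using this
  -- argmax of |v|
  obtain ⟨k, hk⟩ := Function.ne_iff.mp hv0
  have hne : (Finset.univ : Finset (Fin l)).Nonempty := ⟨k, Finset.mem_univ k⟩
  obtain ⟨i₀, -, hi₀⟩ := Finset.exists_max_image Finset.univ (fun i => ‖v i‖) hne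
  set m : ℝ := ‖v i₀‖ with hm
  have hmax : ∀ j, ‖v j‖ ≤ m := fun j => hi₀ j (Finset.mem_univ j)
  have hmpos : 0 < m := lt_of_lt_of_le (by simpa using hk) (hmax k)
  -- the basic estimate for any i
  have hest : ∀ i, ‖lam‖ * ‖v i‖ ≤ m := by
    intro i
    calc ‖lam‖ * ‖v i‖ = ‖∑ j, (Y i j : ℂ) * v j‖ := by
          rw [← norm_mul, heig i]
      _ ≤ ∑ j, ‖(Y i j : ℂ) * v j‖ := norm_sum_le _ _
      _ = ∑ j, Y i j * ‖v j‖ := by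
          refine Finset.sum_congr rfl fun j _ => ?_
          rw [norm_mul, Complex.norm_real, Real.norm_eq_abs, abs_of_nonneg (hnonneg i j)]
      _ ≤ ∑ j, Y i j * m := Finset.sum_le_sum fun j _ =>
          mul_le_mul_of_nonneg_left (hmax j) (hnonneg i j)
      _ = (∑ j, Y i j) * m := (Finset.sum_mul _ _ _).symm
      _ ≤ 1 * m := mul_le_mul_of_nonneg_right (hsum i) hmpos.le
      _ = m := one_mul m
  have hle1 : ‖lam‖ ≤ 1 := by
    have := hest i₀
    rw [← hm] at this
    nlinarith
  by_contra hcon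
  have habs1 : ‖lam‖ = 1 := le_antisymm hle1 (not_lt.mp hcon)
  -- equality analysis on S = {i | |v i| = m}
  classical
  set p : Fin l → Prop := fun i => ‖v i‖ = m with hp
  have hkey : ∀ i, p i → (∀ j, ¬ p j → Y i j = 0) ∧ (∑ j, Y i j * m = m) := by
    intro i hpi
    have h1 : ‖∑ j, (Y i j : ℂ) * v j‖ = m := by
      rw [← heig i, norm_mul, habs1, one_mul, hpi]
    have h2 : ∑ j, Y i j * ‖v j‖ ≤ ∑ j, Y i j * m :=
      Finset.sum_le_sum fun j _ => mul_le_mul_of_nonneg_left (hmax j) (hnonneg i j)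
    have h3 : ‖∑ j, (Y i j : ℂ) * v j‖ ≤ ∑ j, Y i j * ‖v j‖ := by
      refine le_trans (norm_sum_le _ _) (le_of_eq ?_)
      refine Finset.sum_congr rfl fun j _ => ?_
      rw [norm_mul, Complex.norm_real, Real.norm_eq_abs, abs_of_nonneg (hnonneg i j)]
    have h4 : ∑ j, Y i j * m ≤ m := by
      calc ∑ j, Y i j * m = (∑ j, Y i j) * m := (Finset.sum_mul _ _ _).symm
        _ ≤ 1 * m := mul_le_mul_of_nonneg_right (hsum i) hmpos.le
        _ = m := one_mul m
    have hsum_eq : ∑ j, Y i j * m = m := le_antisymm h4 (by rw [← h1] at *; linarith)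
    have hmid : ∑ j, Y i j * ‖v j‖ = ∑ j, Y i j * m := by
      rw [hsum_eq]; rw [← h1] at *; linarith
    have hterm : ∀ j ∈ Finset.univ, Y i j * ‖v j‖ = Y i j * m :=
      (Finset.sum_eq_sum_iff_of_le fun j _ =>
        mul_le_mul_of_nonneg_left (hmax j) (hnonneg i j)).mp hmid
    refine ⟨fun j hpj => ?_, hsum_eq⟩
    by_contra hY0
    have hYpos : 0 < Y i j := lt_of_le_of_ne (hnonneg i j) (Ne.symm hY0)
    have := hterm j (Finset.mem_univ j)
    exact hpj (mul_left_cancel₀ hYpos.ne' this)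
  -- block structure: det of the S-block is zero
  have htri : ∀ i, p i → ∀ j, ¬ p j → ((1 : Matrix (Fin l) (Fin l) ℝ) - Y) i j = 0 := by
    intro i hpi j hpj
    have hij : i ≠ j := fun h => hpj (h ▸ hpi)
    simp [Matrix.sub_apply, Matrix.one_apply_ne hij, (hkey i hpi).1 j hpj]
  have hblock : (((1 : Matrix (Fin l) (Fin l) ℝ) - Y).toSquareBlockProp p).det = 0 := by
    rw [← Matrix.exists_mulVec_eq_zero_iff]
    refine ⟨fun _ => 1, ?_, ?_⟩
    · intro h
      have := congrFun h ⟨i₀, hm.symm⟩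
      simp at this
    · funext i
      obtain ⟨i, hpi⟩ := i
      obtain ⟨hzero, hsum1⟩ := hkey i hpi
      have hsum1' : ∑ j, Y i j = 1 := by
        have h : (∑ j, Y i j) * m = 1 * m := by rw [Finset.sum_mul, one_mul]; exact hsum1
        exact mul_right_cancel₀ hmpos.ne' h
      simp only [Matrix.mulVec, dotProduct, Matrix.toSquareBlockProp_def,
        Pi.zero_apply, mul_one]
      have : ∑ j : {a // p a}, ((1 : Matrix (Fin l) (Fin l) ℝ) - Y) i j.1 = 0 := by
        rw [← Finset.subtype_univ, Finset.sum_subtype_eq_sum_filter]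
        rw [Finset.sum_subset (Finset.filter_subset _ _)]
        · simp only [Matrix.sub_apply]
          rw [Finset.sum_sub_distrib, hsum1']
          simp [Matrix.one_apply, hpi]
        · intro j _ hj
          simp only [Finset.mem_filter, Finset.mem_univ, true_and] at hj
          have hij : i ≠ j := fun h => hj (h ▸ hpi)
          simp [Matrix.sub_apply, Matrix.one_apply_ne hij, hzero j hj]
      simpa using this
  have := Matrix.twoBlockTriangular_det' ((1 : Matrix (Fin l) (Fin l) ℝ) - Y) p htri
  rw [hblock, zero_mul] at this
  exact hdet this
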